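/- The function f : (−1, ∞) → ℝ defined by f(x) = (log(1+x) − x)/(x²/2) for x ≠ 0 and f(0) = −1 is continuous and monotonically increasing on (−1, ∞). -/

import Mathlib

open Real Set Filter Topology

/-- f(x) = (log(1+x) − x)/(x²/2) for x ≠ 0, with f(0) = −1 (removable singularity). -/
noncomputable def fanRatio (x : ℝ) : ℝ :=
  if x = 0 then -1 else (Real.log (1 + x) - x) / (x ^ 2 / 2)

lemma fanRatio_eq {x : ℝ} (hx : x ≠ 0) :
    fanRatio x = (Real.log (1 + x) - x) / (x ^ 2 / 2) := if_neg hx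

lemma fanRatio_continuousAt_zero : ContinuousAt fanRatio 0 := by
  rw [← continuousWithinAt_compl_self]
  have h0 : fanRatio 0 = -1 := if_pos rfl
  rw [ContinuousWithinAt, h0]
  have hev : ∀ᶠ x in 𝓝[≠] (0:ℝ),
      (Real.log (1 + x) - x) / (x ^ 2 / 2) = fanRatio x := by
    filter_upwards [self_mem_nhdsWithin] with x hx
    exact (fanRatio_eq hx).symm
  refine Tendsto.congr' hev ?_
  have hball : ∀ᶠ x : ℝ in 𝓝[≠] (0:ℝ), |x| < 1 ∧ x ≠ 0 := by
    have h1 : ∀ᶠ x : ℝ in 𝓝 0, |x| < 1 := by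
      filter_upwards [Metric.ball_mem_nhds (0:ℝ) one_pos] with x hx
      simpa [Real.dist_eq] using hx
    exact (eventually_nhdsWithin_of_eventually_nhds h1).and self_mem_nhdsWithin
  apply HasDerivAt.lhopital_zero_nhdsNE (f' := fun x => 1/(1+x) - 1) (g' := fun x => x)
  · filter_upwards [hball] with x hx
    have h1 : (1:ℝ) + x ≠ 0 := by
      have := abs_lt.mp hx.1; intro h; linarith
    have d3 : HasDerivAt (fun x : ℝ => Real.log (1 + x)) (1/(1+x)) x := by
      simpa using (((hasDerivAt_id x).const_add (1:ℝ)).log h1)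
    exact d3.sub (hasDerivAt_id x)
  · filter_upwards with x
    simpa using (hasDerivAt_pow 2 x).div_const 2
  · filter_upwards [hball] with x hx using hx.2
  · have hc : ContinuousAt (fun x : ℝ => Real.log (1 + x) - x) 0 := by
      have : ContinuousAt (fun x : ℝ => Real.log (1 + x)) 0 :=
        (Real.continuousAt_log (by norm_num)).comp
          ((continuous_const.add continuous_id).continuousAt)
      exact this.sub continuousAt_id
    have := hc.tendsto
    simp only [Real.log_one, add_zero, sub_zero] at this
    simpa using tendsto_nhdsWithin_of_tendsto_nhds this
  · have hc : ContinuousAt (fun x : ℝ => x ^ 2 / 2) 0 := by fun_prop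
    have := hc.tendsto
    norm_num at this
    exact tendsto_nhdsWithin_of_tendsto_nhds this
  · have hev2 : ∀ᶠ x in 𝓝[≠] (0:ℝ), -1/(1+x) = (1/(1+x) - 1)/x := by
      filter_upwards [hball] with x hx
      have h1 : (1:ℝ) + x ≠ 0 := by
        have := abs_lt.mp hx.1; intro h; linarith
      field_simp [hx.2]
      ring
    refine Tendsto.congr' hev2 ?_
    have hc : ContinuousAt (fun x : ℝ => -1/(1+x)) 0 := by
      apply ContinuousAt.div continuousAt_const (by fun_prop)
      norm_num
    have := hc.tendsto
    norm_num at this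
    exact tendsto_nhdsWithin_of_tendsto_nhds this

noncomputable def fanAux (x : ℝ) : ℝ := 2*x - x^2/(1+x) - 2*Real.log (1+x)

lemma fanAux_hasDeriv {x : ℝ} (hx : -1 < x) :
    HasDerivAt fanAux (x^2/(1+x)^2) x := by
  have h1 : (1:ℝ) + x ≠ 0 := by intro h; linarith
  have d1 : HasDerivAt (fun x : ℝ => 2*x) 2 x := by
    simpa using (hasDerivAt_id x).const_mul (2:ℝ)
  have d2 : HasDerivAt (fun x : ℝ => x^2/(1+x))
      ((2*x*(1+x) - x^2*1)/(1+x)^2) x := by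
    have := (hasDerivAt_pow 2 x).div ((hasDerivAt_id x).const_add (1:ℝ)) h1
    simp only [id_eq] at this
    refine this.congr_deriv ?_
    push_cast; ring
  have d3 : HasDerivAt (fun x : ℝ => 2 * Real.log (1 + x)) (2 * (1/(1+x))) x := by
    exact (by simpa using (((hasDerivAt_id x).const_add (1:ℝ)).log h1) :
      HasDerivAt (fun x : ℝ => Real.log (1 + x)) (1/(1+x)) x).const_mul 2
  have := (d1.sub d2).sub d3
  refine this.congr_deriv ?_
  field_simp
  ring

lemma fanAux_zero : fanAux 0 = 0 := by simp [fanAux]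

lemma fanAux_neg {x : ℝ} (hx : -1 < x) (hx0 : x < 0) : fanAux x < 0 := by
  have hmono : StrictMonoOn fanAux (Ioc (-1 : ℝ) 0) := by
    apply strictMonoOn_of_deriv_pos (convex_Ioc _ _)
    · intro y hy
      exact (fanAux_hasDeriv hy.1).continuousAt.continuousWithinAt
    · intro y hy
      rw [interior_Ioc] at hy
      rw [(fanAux_hasDeriv hy.1).deriv]
      have h1 : (0:ℝ) < 1 + y := by linarith [hy.1]
      have h2 : y ≠ 0 := ne_of_lt hy.2
      positivity
  have := hmono ⟨hx, le_of_lt hx0⟩ ⟨by norm_num, le_refl 0⟩ hx0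
  rwa [fanAux_zero] at this

lemma fanAux_pos {x : ℝ} (hx0 : 0 < x) : 0 < fanAux x := by
  have hmono : StrictMonoOn fanAux (Ici (0 : ℝ)) := by
    apply strictMonoOn_of_deriv_pos (convex_Ici _)
    · intro y hy
      have : (-1:ℝ) < y := by simp at hy; linarith
      exact (fanAux_hasDeriv this).continuousAt.continuousWithinAt
    · intro y hy
      rw [interior_Ici] at hy
      have hy' : (0:ℝ) < y := hy
      rw [(fanAux_hasDeriv (by linarith)).deriv]
      have h1 : (0:ℝ) < 1 + y := by linarith
      have h2 : y ≠ 0 := ne_of_gt hy'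
      positivity
  have := hmono (self_mem_Ici) (le_of_lt hx0 : (0:ℝ) ≤ x) hx0
  rwa [fanAux_zero] at this

lemma fanRatio_hasDeriv {x : ℝ} (hx : -1 < x) (hx0 : x ≠ 0) :
    HasDerivAt fanRatio
      (((1/(1+x) - 1) * (x^2/2) - (Real.log (1+x) - x) * x) / (x^2/2)^2) x := by
  have h1 : (1:ℝ) + x ≠ 0 := by intro h; linarith
  have d3 : HasDerivAt (fun x : ℝ => Real.log (1 + x) - x) (1/(1+x) - 1) x := by
    exact (by simpa using (((hasDerivAt_id x).const_add (1:ℝ)).log h1) :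
      HasDerivAt (fun x : ℝ => Real.log (1 + x)) (1/(1+x)) x).sub (hasDerivAt_id x)
  have dg : HasDerivAt (fun x : ℝ => x^2/2) x x := by
    simpa using (hasDerivAt_pow 2 x).div_const 2
  have hg0 : x^2/2 ≠ 0 := by positivity
  have hd := d3.div dg hg0
  refine hd.congr_of_eventuallyEq ?_
  filter_upwards [compl_singleton_mem_nhds hx0] with y hy
  exact fanRatio_eq hy

lemma fanRatio_deriv_pos {x : ℝ} (hx : -1 < x) (hx0 : x ≠ 0) :
    0 < deriv fanRatio x := by
  rw [(fanRatio_hasDeriv hx hx0).deriv]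
  have h1 : (0:ℝ) < 1 + x := by linarith
  have hnum : (1/(1+x) - 1) * (x^2/2) - (Real.log (1+x) - x) * x
      = x/2 * fanAux x := by
    unfold fanAux
    field_simp
    ring
  rw [hnum]
  have hden : (0:ℝ) < (x^2/2)^2 := by positivity
  apply div_pos _ hden
  rcases lt_or_gt_of_ne hx0 with h | h
  · exact mul_pos_of_neg_of_neg (by linarith) (fanAux_neg hx h)
  · exact mul_pos (by linarith) (fanAux_pos h)

lemma fanRatio_contOn : ContinuousOn fanRatio (Set.Ioi (-1 : ℝ)) := by
  intro x hx
  by_cases hx0 : x = 0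
  · subst hx0
    exact fanRatio_continuousAt_zero.continuousWithinAt
  · exact ((fanRatio_hasDeriv hx hx0).continuousAt).continuousWithinAt

/-- The function f is continuous and monotonically increasing on (−1, ∞). -/
theorem fanRatio_continuous_monotone :
    ContinuousOn fanRatio (Set.Ioi (-1 : ℝ)) ∧ MonotoneOn fanRatio (Set.Ioi (-1 : ℝ)) := by
  refine ⟨fanRatio_contOn, ?_⟩
  have m1 : StrictMonoOn fanRatio (Ioc (-1 : ℝ) 0) := by
    apply strictMonoOn_of_deriv_pos (convex_Ioc _ _)
    · exact fanRatio_contOn.mono (fun y hy => hy.1)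
    · intro y hy
      rw [interior_Ioc] at hy
      exact fanRatio_deriv_pos hy.1 (ne_of_lt hy.2)
  have m2 : StrictMonoOn fanRatio (Ici (0 : ℝ)) := by
    apply strictMonoOn_of_deriv_pos (convex_Ici _)
    · exact fanRatio_contOn.mono (fun y hy => by simp at hy ⊢; linarith)
    · intro y hy
      rw [interior_Ici] at hy
      exact fanRatio_deriv_pos (by linarith [mem_Ioi.mp hy]) (ne_of_gt hy)
  intro a ha b hb hab
  rcases le_or_gt b 0 with hb0 | hb0
  · exact m1.monotoneOn ⟨ha, le_trans hab hb0⟩ ⟨hb, hb0⟩ hab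
  rcases le_or_gt 0 a with ha0 | ha0
  · exact m2.monotoneOn ha0 (le_of_lt hb0) hab
  · calc fanRatio a ≤ fanRatio 0 :=
        m1.monotoneOn ⟨ha, le_of_lt ha0⟩ ⟨by norm_num, le_refl 0⟩ (le_of_lt ha0)
      _ ≤ fanRatio b := m2.monotoneOn self_mem_Ici (le_of_lt hb0) (le_of_lt hb0)
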